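/- arXiv:alg-geom/9505001 — 3 statements merged into one kernel-verified Lean document; each statement's English description precedes it below -/
import Mathlib

section
/- Let v ∈ Sₙ, let 1 ≤ a < b ≤ n with ℓ(v·t_{a,b}) = ℓ(v)+1, and let 1 ≤ p ≤ n with p ∉ {a,b}. Then ℓ((v·t_{a,b})|ₚ) = ℓ(v|ₚ) + 1. -/
open Equiv MvPolynomial

attribute [local instance] Classical.propDecidable

namespace SchubertPieri

/-- Position `j ∈ {1,…,N}` (1-indexed) as an element of `Fin N` (0-indexed). -/
def pos (N : ℕ) [NeZero N] (j : ℕ) : Fin N :=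
  ⟨(j - 1) % N, Nat.mod_lt _ (Nat.pos_of_ne_zero (NeZero.ne N))⟩

/-- The transposition `t_{a,b}` interchanging positions `a` and `b` (1-indexed). -/
def t (N : ℕ) [NeZero N] (a b : ℕ) : Equiv.Perm (Fin N) :=
  Equiv.swap (pos N a) (pos N b)

/-- The value `w(j)` for `j ∈ {1,…,N}` (1-indexed). -/
def val {N : ℕ} [NeZero N] (w : Equiv.Perm (Fin N)) (j : ℕ) : ℕ :=
  (w (pos N j) : ℕ) + 1

/-- The length of `w`: its number of inversions. -/
def len {N : ℕ} (w : Equiv.Perm (Fin N)) : ℕ :=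
  (Finset.univ.filter fun p : Fin N × Fin N => p.1 < p.2 ∧ w p.2 < w p.1).card

/-- The longest permutation `w₀ : j ↦ N+1-j`. -/
def w0 (N : ℕ) : Equiv.Perm (Fin N) :=
  ⟨Fin.rev, Fin.rev, Fin.rev_rev, Fin.rev_rev⟩

/-- The product `t_{a 0, b 0} ⋯ t_{a (i-1), b (i-1)}`. -/
def tProd (N : ℕ) [NeZero N] (a b : ℕ → ℕ) (i : ℕ) : Equiv.Perm (Fin N) :=
  ((List.range i).map fun j => t N (a j) (b j)).prod

/-- `r[k,m] = t_{k,k+1} t_{k,k+2} ⋯ t_{k,k+m}`, the (m+1)-cycle with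
`r[k,m](k) = k+m` and `r[k,m](j) = j-1` for `k+1 ≤ j ≤ k+m`. -/
def rPerm (N k m : ℕ) [NeZero N] : Equiv.Perm (Fin N) :=
  ((List.range m).map fun i => t N k (k + 1 + i)).prod

/-- `c[k,m] = t_{k,k+1} t_{k-1,k+1} ⋯ t_{k-m+1,k+1}`, the (m+1)-cycle with
`c[k,m](j) = j+1` for `k-m+1 ≤ j ≤ k` and `c[k,m](k+1) = k-m+1`. -/
def cPerm (N k m : ℕ) [NeZero N] : Equiv.Perm (Fin N) :=
  ((List.range m).map fun i => t N (k - i) (k + 1)).prod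

/-- The conditions that `aᵢ ≤ k < bᵢ` (with all indices in `{1,…,N}`) and that
`ℓ(w t_{a₁ b₁} ⋯ t_{aᵢ bᵢ}) = ℓ(w) + i` for `1 ≤ i ≤ m`. -/
def StepOK (N k m : ℕ) [NeZero N] (w : Equiv.Perm (Fin N)) (a b : ℕ → ℕ) : Prop :=
  (∀ i, i < m → 1 ≤ a i ∧ a i ≤ k ∧ k < b i ∧ b i ≤ N) ∧
  (∀ i, i ≤ m → len (w * tProd N a b i) = len w + i)

/-- `w →_{r[k,m]} w'`. -/
def RelR (N k m : ℕ) [NeZero N] (w w' : Equiv.Perm (Fin N)) : Prop :=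
  ∃ a b : ℕ → ℕ, StepOK N k m w a b ∧ w' = w * tProd N a b m ∧
    (∀ i j, i < m → j < m → i ≠ j → b i ≠ b j)

/-- `w →_{c[k,m]} w'`. -/
def RelC (N k m : ℕ) [NeZero N] (w w' : Equiv.Perm (Fin N)) : Prop :=
  ∃ a b : ℕ → ℕ, StepOK N k m w a b ∧ w' = w * tProd N a b m ∧
    (∀ i j, i < m → j < m → i ≠ j → a i ≠ a j)

/-- The divided difference operator `∂ᵢ f = (f - sᵢ·f)/(xᵢ - xᵢ₊₁)` (1-indexed `i`);
the quotient is exact, and is recovered here as the (unique) witness of divisibility. -/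
noncomputable def divDiff {N : ℕ} [NeZero N] (i : ℕ) (f : MvPolynomial (Fin N) ℤ) :
    MvPolynomial (Fin N) ℤ :=
  if h : (X (pos N i) - X (pos N (i + 1))) ∣ (f - rename (⇑(t N i (i + 1))) f) then
    h.choose
  else 0

/-- `∂_{a₁} ∘ ⋯ ∘ ∂_{a_p}` applied to `f`, for a word `l = [a₁,…,a_p]`. -/
noncomputable def divDiffWord {N : ℕ} [NeZero N] (l : List ℕ) (f : MvPolynomial (Fin N) ℤ) :
    MvPolynomial (Fin N) ℤ :=
  l.foldr divDiff f

/-- Auxiliary: produce a reduced word for `w` by repeatedly removing a descent. -/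
def redWordAux (N : ℕ) [NeZero N] : ℕ → Equiv.Perm (Fin N) → List ℕ
  | 0, _ => []
  | fuel + 1, w =>
    match ((List.range (N - 1)).map (· + 1)).find? (fun i => decide (val w (i + 1) < val w i)) with
    | none => []
    | some i => redWordAux N fuel (w * t N i (i + 1)) ++ [i]

/-- A canonical reduced word `(a₁,…,a_p)` for `w`, i.e. `w = s_{a₁} ⋯ s_{a_p}` with `p = ℓ(w)`. -/
def redWord (N : ℕ) [NeZero N] (w : Equiv.Perm (Fin N)) : List ℕ :=
  redWordAux N (N * N) w

/-- The staircase monomial `x₁^{N-1} x₂^{N-2} ⋯ x_{N-1}`. -/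
noncomputable def staircase (N : ℕ) : MvPolynomial (Fin N) ℤ :=
  ∏ i : Fin N, X i ^ (N - 1 - (i : ℕ))

/-- The Schubert polynomial `𝔖_w = ∂_{w⁻¹w₀}(x₁^{N-1} ⋯ x_{N-1})`. -/
noncomputable def schubertPoly (N : ℕ) [NeZero N] (w : Equiv.Perm (Fin N)) :
    MvPolynomial (Fin N) ℤ :=
  divDiffWord (redWord N (w⁻¹ * w0 N)) (staircase N)

/-- The ideal of `Rₙ` generated by the symmetric polynomials with zero constant term. -/
noncomputable def symIdeal (N : ℕ) : Ideal (MvPolynomial (Fin N) ℤ) :=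
  Ideal.span {f : MvPolynomial (Fin N) ℤ | f.IsSymmetric ∧ constantCoeff f = 0}

/-- The ring `Hₙ = Rₙ/𝒮`. -/
abbrev HRing (N : ℕ) := MvPolynomial (Fin N) ℤ ⧸ symIdeal N

/-- The class of the Schubert polynomial `𝔖_w` in `Hₙ`. -/
noncomputable def SS (N : ℕ) [NeZero N] (w : Equiv.Perm (Fin N)) : HRing N :=
  Ideal.Quotient.mk (symIdeal N) (schubertPoly N w)

/-- The complete homogeneous symmetric polynomial of degree `m` in `x₁,…,x_k`. -/
noncomputable def hPoly (N k m : ℕ) : MvPolynomial (Fin N) ℤ :=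
  ∑ s ∈ (Finset.univ.filter fun i : Fin N => (i : ℕ) < k).sym m,
    (Multiset.map X (s : Multiset (Fin N))).prod

/-- The elementary symmetric polynomial of degree `m` in `x₁,…,x_k`. -/
noncomputable def ePoly (N k m : ℕ) : MvPolynomial (Fin N) ℤ :=
  ∑ s ∈ (Finset.univ.filter fun i : Fin N => (i : ℕ) < k).powersetCard m, ∏ i ∈ s, X i

/-- Covering relation of the `k`-Bruhat order. -/
def kCover (N k : ℕ) [NeZero N] (w w' : Equiv.Perm (Fin N)) : Prop :=
  ∃ a b : ℕ, 1 ≤ a ∧ a ≤ k ∧ k < b ∧ b ≤ N ∧ w' = w * t N a b ∧ len w' = len w + 1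

/-- The (strict) `k`-Bruhat order `<ₖ`. -/
def kBruhat (N k : ℕ) [NeZero N] : Equiv.Perm (Fin N) → Equiv.Perm (Fin N) → Prop :=
  Relation.TransGen (kCover N k)

/-- The label `w⁽ⁱ⁺¹⁾(a_{i+1})` (0-indexed `i`) of the `(i+1)`-st step of a path. -/
def label {N : ℕ} [NeZero N] (w : Equiv.Perm (Fin N)) (a b : ℕ → ℕ) (i : ℕ) : ℕ :=
  val (w * tProd N a b (i + 1)) (a i)

/-- `(a,b)` encodes a path of length `m` in the `k`-Bruhat order from `w` to `w'`
(normalized so that `a i = b i = 0` for `i ≥ m`, making the encoding unique). -/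
def PathWit (N k m : ℕ) [NeZero N] (w w' : Equiv.Perm (Fin N))
    (ab : (ℕ → ℕ) × (ℕ → ℕ)) : Prop :=
  StepOK N k m w ab.1 ab.2 ∧ w' = w * tProd N ab.1 ab.2 m ∧
    ∀ i, m ≤ i → ab.1 i = 0 ∧ ab.2 i = 0

/-- Paths of length `m` in the `k`-Bruhat order from `w` to `w'` with strictly
increasing labels. -/
def IncPaths (N k m : ℕ) [NeZero N] (w w' : Equiv.Perm (Fin N)) :
    Set ((ℕ → ℕ) × (ℕ → ℕ)) :=
  {ab | PathWit N k m w w' ab ∧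
    ∀ i j, i < j → j < m → label w ab.1 ab.2 i < label w ab.1 ab.2 j}

/-- Paths of length `m` in the `k`-Bruhat order from `w` to `w'` with strictly
decreasing labels. -/
def DecPaths (N k m : ℕ) [NeZero N] (w w' : Equiv.Perm (Fin N)) :
    Set ((ℕ → ℕ) × (ℕ → ℕ)) :=
  {ab | PathWit N k m w w' ab ∧
    ∀ i j, i < j → j < m → label w ab.1 ab.2 j < label w ab.1 ab.2 i}


/-- The cycle `(x₁ x₂ … x_r)` (sending `x₁ ↦ x₂ ↦ ⋯ ↦ x_r ↦ x₁`), as a product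
of transpositions. -/
def cycleList (N : ℕ) [NeZero N] (l : List ℕ) : Equiv.Perm (Fin N) :=
  ((l.zip l.tail).map fun p => t N p.1 p.2).prod

/-- The Grassmannian permutation `h[k;p,q]` of descent `k` and hook shape `(p,1^{q-1})`:
the `(p+q)`-cycle `(k-q+1  k-q+2 … k  k+p  k+p-1 … k+1)`. -/
def hookPerm (N k p q : ℕ) [NeZero N] : Equiv.Perm (Fin N) :=
  cycleList N (((List.range q).map fun i => k - q + 1 + i) ++
    ((List.range p).reverse.map fun i => k + 1 + i))

/-- `w|ₚ ∈ S_{N-1}`: delete row `p` and column `w(p)` from the permutation matrix of `w`. -/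
def drop {N : ℕ} (w : Equiv.Perm (Fin (N + 1))) (p : Fin (N + 1)) : Equiv.Perm (Fin N) :=
  Equiv.removeNone (((finSuccEquiv' p).symm.trans (w : Fin (N + 1) ≃ Fin (N + 1))).trans
    (finSuccEquiv' (w p)))

/-- `lam` is a partition with at most `k` parts (1-indexed parts `lam 1 ≥ lam 2 ≥ ⋯`,
normalized by `lam 0 = 0`). -/
def IsPartFun (k : ℕ) (lam : ℕ → ℕ) : Prop :=
  lam 0 = 0 ∧ (∀ j, 1 ≤ j → lam (j + 1) ≤ lam j) ∧ ∀ j, k < j → lam j = 0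

/-- `h_d(x₁,…,x_k)` for an integer `d`, with `h_d = 0` for `d < 0`. -/
noncomputable def hPolyZ (N k : ℕ) (d : ℤ) : MvPolynomial (Fin N) ℤ :=
  if 0 ≤ d then hPoly N k d.toNat else 0

/-- The Schur polynomial `s_λ(x₁,…,x_k)`, via the Jacobi–Trudi determinant
`det(h_{λᵢ+j-i})_{1 ≤ i,j ≤ k}`. -/
noncomputable def schurPoly (N k : ℕ) (lam : ℕ → ℕ) : MvPolynomial (Fin N) ℤ :=
  (Matrix.of fun i j : Fin k =>
    hPolyZ N k ((lam ((i : ℕ) + 1) : ℤ) + (j : ℕ) - (i : ℕ))).det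

/-- `r_j = #{i : aᵢ = j}` (with `i` ranging over `0,…,m-1`, 0-indexed). -/
def rJ (a : ℕ → ℕ) (m j : ℕ) : ℕ := ((Finset.range m).filter fun i => a i = j).card

/-- `μ_j = r_{j+1} + ⋯ + r_k`. -/
def muJ (a : ℕ → ℕ) (m k j : ℕ) : ℕ :=
  if j = 0 then 0 else ∑ j' ∈ Finset.Icc (j + 1) k, rJ a m j'

/-- `λ_j = μ_j + r_j`. -/
def lamJ (a : ℕ → ℕ) (m k j : ℕ) : ℕ :=
  if j = 0 then 0 else muJ a m k j + rJ a m j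

/-- `d_j = #{i : bᵢ = N+1-j}` (with `i` ranging over `0,…,m-1`, 0-indexed). -/
def dJ (b : ℕ → ℕ) (m N j : ℕ) : ℕ :=
  ((Finset.range m).filter fun i => b i = N + 1 - j).card

/-- `μ′_j = d_{j+1} + ⋯ + d_{N-k}`. -/
def muJ' (b : ℕ → ℕ) (m N k j : ℕ) : ℕ :=
  if j = 0 then 0 else ∑ j' ∈ Finset.Icc (j + 1) (N - k), dJ b m N j'

/-- `λ′_j = μ′_j + d_j`. -/
def lamJ' (b : ℕ → ℕ) (m N k j : ℕ) : ℕ :=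
  if j = 0 then 0 else muJ' b m N k j + dJ b m N j

/-- The conjugate (transpose) partition: `νᵗ_j = #{i : νᵢ ≥ j}`, for `ν` with at
most `k` parts. -/
def conjPart (k : ℕ) (nu : ℕ → ℕ) (j : ℕ) : ℕ :=
  if j = 0 then 0 else ((Finset.Icc 1 k).filter fun i => j ≤ nu i).card

/-- `wv` is the Grassmannian permutation of descent `k` and shape `nu`:
`wv(j) = j + ν_{k+1-j}` for `1 ≤ j ≤ k`, and `wv` is increasing on `{k+1,…,N}`. -/
def IsGrassOf (N k : ℕ) [NeZero N] (nu : ℕ → ℕ) (wv : Equiv.Perm (Fin N)) : Prop :=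
  (∀ j, 1 ≤ j → j ≤ k → val wv j = j + nu (k + 1 - j)) ∧
  (∀ j, k < j → j < N → val wv j < val wv (j + 1))

/-- Paths of length `m` in the `k`-Bruhat order from `w` to `w'` whose labels
increase strictly for the first `p` steps and decrease strictly thereafter
(positions `p, p+1, …, m` being decreasing, 1-indexed). -/
def IncDecPaths (N k m p : ℕ) [NeZero N] (w w' : Equiv.Perm (Fin N)) :
    Set ((ℕ → ℕ) × (ℕ → ℕ)) :=
  {ab | PathWit N k m w w' ab ∧
    (∀ i j, i < j → j < p → label w ab.1 ab.2 i < label w ab.1 ab.2 j) ∧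
    (∀ i j, p - 1 ≤ i → i < j → j < m → label w ab.1 ab.2 j < label w ab.1 ab.2 i)}

/-- Paths of length `m` in the `k`-Bruhat order from `w` to `w'` whose labels
decrease strictly for the first `q` steps and increase strictly thereafter. -/
def DecIncPaths (N k m q : ℕ) [NeZero N] (w w' : Equiv.Perm (Fin N)) :
    Set ((ℕ → ℕ) × (ℕ → ℕ)) :=
  {ab | PathWit N k m w w' ab ∧
    (∀ i j, i < j → j < q → label w ab.1 ab.2 j < label w ab.1 ab.2 i) ∧
    (∀ i j, q - 1 ≤ i → i < j → j < m → label w ab.1 ab.2 i < label w ab.1 ab.2 j)}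


private lemma len_card {N : ℕ} (w : Equiv.Perm (Fin N)) :
    len w = (Finset.univ.filter fun p : Fin N × Fin N => p.1 < p.2 ∧ w p.2 < w p.1).card := rfl

private lemma len_mul_swap {N : ℕ} (u : Equiv.Perm (Fin N)) (A B : Fin N) :
    len (u * Equiv.swap A B) =
      (Finset.univ.filter fun p : Fin N × Fin N =>
        Equiv.swap A B p.1 < Equiv.swap A B p.2 ∧ u p.2 < u p.1).card := by
  rw [len_card]
  apply Finset.card_nbij' (fun p => (Equiv.swap A B p.1, Equiv.swap A B p.2))
      (fun p => (Equiv.swap A B p.1, Equiv.swap A B p.2))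
  · intro p hp
    simp only [Finset.mem_coe, Set.mem_setOf_eq, Finset.mem_filter, Finset.mem_univ, true_and, Equiv.Perm.mul_apply] at hp
    simp only [Finset.mem_coe, Set.mem_setOf_eq, Finset.mem_filter, Finset.mem_univ, true_and, Equiv.swap_apply_self]
    exact (Finset.mem_filter.1 hp).2
  · intro q hq
    simp only [Finset.mem_coe, Set.mem_setOf_eq, Finset.mem_filter, Finset.mem_univ, true_and] at hq
    simp only [Finset.mem_coe, Set.mem_setOf_eq, Finset.mem_filter, Finset.mem_univ, true_and, Equiv.Perm.mul_apply,
      Equiv.swap_apply_self]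
    exact Finset.mem_filter.2 ⟨Finset.mem_univ _, by simpa using hq⟩
  · intro p _; simp [Equiv.swap_apply_self]
  · intro p _; simp [Equiv.swap_apply_self]

private lemma len_add_le {N : ℕ} (u : Equiv.Perm (Fin N)) (A B : Fin N)
    (hAB : A < B) (hv : u A < u B) (E : Finset (Fin N × Fin N))
    (hT : ∀ p ∈ E, u p.2 < u p.1)
    (hs : ∀ p ∈ E, Equiv.swap A B p.1 < Equiv.swap A B p.2)
    (hna : ∀ p ∈ E, ¬ p.1 < p.2)
    (hpre : ∀ p ∈ E, ¬ u (Equiv.swap A B p.2) < u (Equiv.swap A B p.1)) :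
    len u + E.card ≤ len (u * Equiv.swap A B) := by
  have hσA : Equiv.swap A B A = B := Equiv.swap_apply_left A B
  have hσB : Equiv.swap A B B = A := Equiv.swap_apply_right A B
  have hσid : ∀ x : Fin N, x ≠ A → x ≠ B → Equiv.swap A B x = x :=
    fun x h1 h2 => Equiv.swap_apply_of_ne_of_ne h1 h2
  set I : Finset (Fin N × Fin N) :=
    Finset.univ.filter (fun p => p.1 < p.2 ∧ u p.2 < u p.1) with hI
  set I' : Finset (Fin N × Fin N) :=
    Finset.univ.filter (fun p => Equiv.swap A B p.1 < Equiv.swap A B p.2 ∧ u p.2 < u p.1)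
    with hI'
  have hImem : ∀ p : Fin N × Fin N, p ∈ I ↔ (p.1 < p.2 ∧ u p.2 < u p.1) := by
    intro p; simp [hI]
  have hI'mem : ∀ p : Fin N × Fin N,
      p ∈ I' ↔ (Equiv.swap A B p.1 < Equiv.swap A B p.2 ∧ u p.2 < u p.1) := by
    intro p; simp [hI']
  have hdisj : Disjoint I E := by
    rw [Finset.disjoint_left]
    intro p hpI hpE
    exact hna p hpE ((hImem p).1 hpI).1
  have hcard : len u + E.card = (I ∪ E).card := by
    rw [Finset.card_union_of_disjoint hdisj, len_card]
  have hlms : len (u * Equiv.swap A B) = I'.card := len_mul_swap u A B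
  rw [hcard, hlms]
  apply Finset.card_le_card_of_injOn
    (fun p => if Equiv.swap A B p.1 < Equiv.swap A B p.2 then p else
      (Equiv.swap A B p.1, Equiv.swap A B p.2))
  · intro p hp
    dsimp only
    rcases Finset.mem_union.1 hp with hpI | hpE
    · obtain ⟨hasc, hT'⟩ := (hImem p).1 hpI
      by_cases hσasc : Equiv.swap A B p.1 < Equiv.swap A B p.2
      · rw [if_pos hσasc]
        exact (hI'mem p).2 ⟨hσasc, hT'⟩
      · rw [if_neg hσasc]
        refine (hI'mem _).2 ⟨?_, ?_⟩
        · show Equiv.swap A B (Equiv.swap A B p.1) < Equiv.swap A B (Equiv.swap A B p.2)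
          rw [Equiv.swap_apply_self, Equiv.swap_apply_self]; exact hasc
        · show u (Equiv.swap A B p.2) < u (Equiv.swap A B p.1)
          by_cases h1A : p.1 = A
          · by_cases h2B : p.2 = B
            · rw [h1A, h2B, hσA, hσB]; exact hv
            · have h2A : p.2 ≠ A := ne_of_gt (h1A ▸ hasc)
              rw [h1A, hσA, hσid p.2 h2A h2B]
              exact lt_trans (h1A ▸ hT') hv
          · by_cases h1B : p.1 = B
            · exfalso
              have hB2 : B < p.2 := h1B ▸ hasc
              have h2B : p.2 ≠ B := ne_of_gt hB2
              have h2A : p.2 ≠ A := ne_of_gt (lt_trans hAB hB2)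
              exact hσasc (by rw [h1B, hσB, hσid p.2 h2A h2B]; exact lt_trans hAB hB2)
            · by_cases h2A : p.2 = A
              · exfalso
                have hp1A : p.1 < A := h2A ▸ hasc
                exact hσasc (by rw [h2A, hσA, hσid p.1 h1A h1B]; exact lt_trans hp1A hAB)
              · by_cases h2B : p.2 = B
                · rw [h2B, hσB, hσid p.1 h1A h1B]
                  exact lt_trans hv (h2B ▸ hT')
                · exfalso
                  exact hσasc (by rw [hσid p.1 h1A h1B, hσid p.2 h2A h2B]; exact hasc)
    · rw [if_pos (hs p hpE)]
      exact (hI'mem p).2 ⟨hs p hpE, hT p hpE⟩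
  · intro p hp q hq heq
    simp only [Finset.coe_union, Set.mem_union, Finset.mem_coe] at hp hq
    dsimp only at heq
    by_cases hps : Equiv.swap A B p.1 < Equiv.swap A B p.2 <;>
      by_cases hqs : Equiv.swap A B q.1 < Equiv.swap A B q.2
    · rwa [if_pos hps, if_pos hqs] at heq
    · rw [if_pos hps, if_neg hqs] at heq
      have hqI : q ∈ I := hq.resolve_right (fun hqE => hqs (hs q hqE))
      obtain ⟨hqasc, hqT⟩ := (hImem q).1 hqI
      exfalso
      have h1 : p.1 = Equiv.swap A B q.1 := congrArg Prod.fst heq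
      have h2 : p.2 = Equiv.swap A B q.2 := congrArg Prod.snd heq
      rcases hp with hpI | hpE
      · obtain ⟨hpasc, _⟩ := (hImem p).1 hpI
        rw [h1, h2] at hpasc
        exact hqs hpasc
      · exact hpre p hpE (by
          rw [h1, h2, Equiv.swap_apply_self, Equiv.swap_apply_self]; exact hqT)
    · rw [if_neg hps, if_pos hqs] at heq
      have hpI : p ∈ I := hp.resolve_right (fun hpE => hps (hs p hpE))
      obtain ⟨hpasc, hpT⟩ := (hImem p).1 hpI
      exfalso
      have h1 : q.1 = Equiv.swap A B p.1 := (congrArg Prod.fst heq).symm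
      have h2 : q.2 = Equiv.swap A B p.2 := (congrArg Prod.snd heq).symm
      rcases hq with hqI | hqE
      · obtain ⟨hqasc, _⟩ := (hImem q).1 hqI
        rw [h1, h2] at hqasc
        exact hps hqasc
      · exact hpre q hqE (by
          rw [h1, h2, Equiv.swap_apply_self, Equiv.swap_apply_self]; exact hpT)
    · rw [if_neg hps, if_neg hqs] at heq
      have h1 : Equiv.swap A B p.1 = Equiv.swap A B q.1 := congrArg Prod.fst heq
      have h2 : Equiv.swap A B p.2 = Equiv.swap A B q.2 := congrArg Prod.snd heq
      exact Prod.ext ((Equiv.swap A B).injective h1) ((Equiv.swap A B).injective h2)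


private def invP {N : ℕ} (w : Equiv.Perm (Fin N)) (P : Fin N) : ℕ :=
  (Finset.univ.filter fun q : Fin N =>
    (q < P ∧ w P < w q) ∨ (P < q ∧ w q < w P)).card

private lemma drop_succAbove {N : ℕ} (w : Equiv.Perm (Fin (N + 1))) (P : Fin (N + 1))
    (j : Fin N) : (w P).succAbove (drop w P j) = w (P.succAbove j) := by
  obtain ⟨i, hi⟩ := Fin.exists_succAbove_eq
    (show w (P.succAbove j) ≠ w P from fun h => Fin.succAbove_ne P j (w.injective h))
  have h2 : (((finSuccEquiv' P).symm.trans (w : Fin (N + 1) ≃ Fin (N + 1))).trans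
      (finSuccEquiv' (w P))) (some j) = some i := by
    rw [Equiv.trans_apply, Equiv.trans_apply, finSuccEquiv'_symm_some]
    show finSuccEquiv' (w P) (w (P.succAbove j)) = some i
    rw [← hi, finSuccEquiv'_succAbove]
  have h3 := Equiv.removeNone_some _ ⟨i, h2⟩
  have h4 : drop w P j = i := Option.some_injective _ (h3.trans h2)
  rw [h4, hi]

private lemma len_drop_add {N : ℕ} (w : Equiv.Perm (Fin (N + 1))) (P : Fin (N + 1)) :
    len w = len (drop w P) + invP w P := by
  have hsplit := Finset.card_filter_add_card_filter_not
    (s := Finset.univ.filter fun p : Fin (N + 1) × Fin (N + 1) => p.1 < p.2 ∧ w p.2 < w p.1)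
    (p := fun p => p.1 = P ∨ p.2 = P)
  rw [Finset.filter_filter, Finset.filter_filter] at hsplit
  rw [len_card, ← hsplit]
  have hNT : (Finset.univ.filter fun p : Fin (N + 1) × Fin (N + 1) =>
      (p.1 < p.2 ∧ w p.2 < w p.1) ∧ ¬(p.1 = P ∨ p.2 = P)).card = len (drop w P) := by
    rw [len_card]
    symm
    apply Finset.card_bij (fun q _ => (P.succAbove q.1, P.succAbove q.2))
    · intro q hq
      simp only [Finset.mem_filter, Finset.mem_univ, true_and] at hq ⊢
      refine ⟨⟨Fin.succAbove_lt_succAbove_iff.2 hq.1, ?_⟩, ?_⟩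
      · rw [← drop_succAbove w P q.1, ← drop_succAbove w P q.2]
        exact Fin.succAbove_lt_succAbove_iff.2 hq.2
      · push_neg
        exact ⟨Fin.succAbove_ne P q.1, Fin.succAbove_ne P q.2⟩
    · intro q1 h1 q2 h2 heq
      have e1 : P.succAbove q1.1 = P.succAbove q2.1 := congrArg Prod.fst heq
      have e2 : P.succAbove q1.2 = P.succAbove q2.2 := congrArg Prod.snd heq
      exact Prod.ext (Fin.succAbove_right_injective e1) (Fin.succAbove_right_injective e2)
    · intro p hp
      simp only [Finset.mem_filter, Finset.mem_univ, true_and] at hp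
      obtain ⟨⟨hasc, hval⟩, hnt⟩ := hp
      push_neg at hnt
      obtain ⟨i1, hi1⟩ := Fin.exists_succAbove_eq hnt.1
      obtain ⟨i2, hi2⟩ := Fin.exists_succAbove_eq hnt.2
      refine ⟨(i1, i2), ?_, by rw [Prod.ext_iff]; exact ⟨hi1, hi2⟩⟩
      simp only [Finset.mem_filter, Finset.mem_univ, true_and]
      constructor
      · rw [← Fin.succAbove_lt_succAbove_iff (p := P), hi1, hi2]; exact hasc
      · rw [← Fin.succAbove_lt_succAbove_iff (p := w P), drop_succAbove, drop_succAbove,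
          hi1, hi2]
        exact hval
  have hT : (Finset.univ.filter fun p : Fin (N + 1) × Fin (N + 1) =>
      (p.1 < p.2 ∧ w p.2 < w p.1) ∧ (p.1 = P ∨ p.2 = P)).card = invP w P := by
    symm
    apply Finset.card_bij (fun q _ => if q < P then (q, P) else (P, q))
    · intro q hq
      simp only [Finset.mem_filter, Finset.mem_univ, true_and] at hq
      rcases hq with ⟨hqP, hwq⟩ | ⟨hPq, hwq⟩
      · rw [if_pos hqP]
        simp only [Finset.mem_filter, Finset.mem_univ, true_and]
        exact ⟨⟨hqP, hwq⟩, Or.inr trivial⟩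
      · rw [if_neg (asymm hPq)]
        simp only [Finset.mem_filter, Finset.mem_univ, true_and]
        exact ⟨⟨hPq, hwq⟩, Or.inl trivial⟩
    · intro q1 h1 q2 h2 heq
      by_cases c1 : q1 < P <;> by_cases c2 : q2 < P
      · rw [if_pos c1, if_pos c2] at heq
        exact congrArg Prod.fst heq
      · rw [if_pos c1, if_neg c2] at heq
        exact absurd (congrArg Prod.fst heq) (fun h => c1.ne h)
      · rw [if_neg c1, if_pos c2] at heq
        exact absurd (congrArg Prod.fst heq).symm (fun h => c2.ne h)
      · rw [if_neg c1, if_neg c2] at heq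
        exact congrArg Prod.snd heq
    · intro p hp
      simp only [Finset.mem_filter, Finset.mem_univ, true_and] at hp
      obtain ⟨⟨hasc, hval⟩, ht⟩ := hp
      rcases ht with h1 | h2
      · refine ⟨p.2, ?_, ?_⟩
        · simp only [Finset.mem_filter, Finset.mem_univ, true_and]
          exact Or.inr ⟨h1 ▸ hasc, h1 ▸ hval⟩
        · rw [if_neg (asymm (h1 ▸ hasc))]
          rw [Prod.ext_iff]
          exact ⟨h1.symm, rfl⟩
      · refine ⟨p.1, ?_, ?_⟩
        · simp only [Finset.mem_filter, Finset.mem_univ, true_and]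
          exact Or.inl ⟨h2 ▸ hasc, h2 ▸ hval⟩
        · rw [if_pos (h2 ▸ hasc)]
          rw [Prod.ext_iff]
          exact ⟨rfl, h2.symm⟩
  omega


private lemma invP_mul_swap {N : ℕ} (v : Equiv.Perm (Fin N)) (A B P : Fin N)
    (hAB : A < B) (hPA : P ≠ A) (hPB : P ≠ B) (hvAB : v A < v B)
    (hmid : ¬(A < P ∧ P < B ∧ v A < v P ∧ v P < v B)) :
    invP (v * Equiv.swap A B) P = invP v P := by
  have hwP : (v * Equiv.swap A B) P = v P := by
    rw [Equiv.Perm.mul_apply, Equiv.swap_apply_of_ne_of_ne hPA hPB]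
  have hwA : (v * Equiv.swap A B) A = v B := by
    rw [Equiv.Perm.mul_apply, Equiv.swap_apply_left]
  have hwB : (v * Equiv.swap A B) B = v A := by
    rw [Equiv.Perm.mul_apply, Equiv.swap_apply_right]
  have hwq : ∀ q : Fin N, q ≠ A → q ≠ B → (v * Equiv.swap A B) q = v q := by
    intro q h1 h2
    rw [Equiv.Perm.mul_apply, Equiv.swap_apply_of_ne_of_ne h1 h2]
  have hsub : ({A, B} : Finset (Fin N)) ⊆ Finset.univ := Finset.subset_univ _
  have hAneB : A ≠ B := hAB.ne
  have key : ∀ u : Equiv.Perm (Fin N), invP u P =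
      (∑ q ∈ Finset.univ \ {A, B},
        (if (q < P ∧ u P < u q) ∨ (P < q ∧ u q < u P) then 1 else 0)) +
      ((if (A < P ∧ u P < u A) ∨ (P < A ∧ u A < u P) then 1 else 0) +
       (if (B < P ∧ u P < u B) ∨ (P < B ∧ u B < u P) then 1 else 0)) := by
    intro u
    rw [invP, Finset.card_filter, ← Finset.sum_sdiff hsub, Finset.sum_pair hAneB]
  rw [key, key]
  congr 1
  · apply Finset.sum_congr rfl
    intro q hq
    rw [Finset.mem_sdiff, Finset.mem_insert, Finset.mem_singleton] at hq
    push_neg at hq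
    rw [hwq q hq.2.1 hq.2.2, hwP]
  · rw [hwP, hwA, hwB]
    have n1 : (A : ℕ) < B := hAB
    have n2 : ((v A : Fin N) : ℕ) < v B := hvAB
    have n3 : (P : ℕ) ≠ A := fun h => hPA (Fin.ext h)
    have n4 : (P : ℕ) ≠ B := fun h => hPB (Fin.ext h)
    have n5 : ((v P : Fin N) : ℕ) ≠ v A := fun h => hPA (v.injective (Fin.ext h))
    have n6 : ((v P : Fin N) : ℕ) ≠ v B := fun h => hPB (v.injective (Fin.ext h))
    have n7 : ¬((A : ℕ) < P ∧ (P : ℕ) < B ∧ ((v A : Fin N) : ℕ) < v P ∧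
        ((v P : Fin N) : ℕ) < v B) := by
      intro h
      exact hmid ⟨h.1, h.2.1, h.2.2.1, h.2.2.2⟩
    simp only [Fin.lt_def]
    split_ifs <;> omega


/-- If `ℓ(v t_{a,b}) = ℓ(v) + 1` and `p ∉ {a,b}`, then
`ℓ((v t_{a,b})|ₚ) = ℓ(v|ₚ) + 1` (here the paper's `n` is `n+2`). -/
theorem drop_length_succ (n : ℕ) (v : Equiv.Perm (Fin (n + 2))) (a b p : ℕ)
    (ha : 1 ≤ a) (hab : a < b) (hb : b ≤ n + 2)
    (hlen : len (v * t (n + 2) a b) = len v + 1)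
    (hp1 : 1 ≤ p) (hpn : p ≤ n + 2) (hpa : p ≠ a) (hpb : p ≠ b) :
    len (drop (v * t (n + 2) a b) (pos (n + 2) p)) =
      len (drop v (pos (n + 2) p)) + 1 := by
  have hav : ((pos (n + 2) a : Fin (n + 2)) : ℕ) = a - 1 := by
    show (a - 1) % (n + 2) = a - 1
    exact Nat.mod_eq_of_lt (by omega)
  have hbv : ((pos (n + 2) b : Fin (n + 2)) : ℕ) = b - 1 := by
    show (b - 1) % (n + 2) = b - 1
    exact Nat.mod_eq_of_lt (by omega)
  have hpv : ((pos (n + 2) p : Fin (n + 2)) : ℕ) = p - 1 := by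
    show (p - 1) % (n + 2) = p - 1
    exact Nat.mod_eq_of_lt (by omega)
  set A := pos (n + 2) a with hAdef
  set B := pos (n + 2) b with hBdef
  set P := pos (n + 2) p with hPdef
  have hABlt : A < B := by rw [Fin.lt_def, hav, hbv]; omega
  have hPA : P ≠ A := fun h => hpa (by
    have := congrArg Fin.val h; rw [hpv, hav] at this; omega)
  have hPB : P ≠ B := fun h => hpb (by
    have := congrArg Fin.val h; rw [hpv, hbv] at this; omega)
  have ht : t (n + 2) a b = Equiv.swap A B := rfl
  rw [ht] at hlen ⊢
  have hswapswap : (v * Equiv.swap A B) * Equiv.swap A B = v := by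
    rw [mul_assoc, Equiv.swap_mul_self, mul_one]
  have hvAB : v A < v B := by
    have hne : v A ≠ v B := fun h => hABlt.ne (v.injective h)
    rcases hne.lt_or_gt with h | h
    · exact h
    · exfalso
      have h2 : (v * Equiv.swap A B) A < (v * Equiv.swap A B) B := by
        rw [Equiv.Perm.mul_apply, Equiv.Perm.mul_apply, Equiv.swap_apply_left,
          Equiv.swap_apply_right]
        exact h
      have h3 := len_add_le (v * Equiv.swap A B) A B hABlt h2 {(B, A)}
        (by intro q hq; rw [Finset.mem_singleton] at hq; subst hq; exact h2)
        (by intro q hq; rw [Finset.mem_singleton] at hq; subst hq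
            show Equiv.swap A B B < Equiv.swap A B A
            rw [Equiv.swap_apply_left, Equiv.swap_apply_right]; exact hABlt)
        (by intro q hq; rw [Finset.mem_singleton] at hq; subst hq; exact asymm hABlt)
        (by intro q hq; rw [Finset.mem_singleton] at hq; subst hq
            show ¬ (v * Equiv.swap A B) (Equiv.swap A B A) <
              (v * Equiv.swap A B) (Equiv.swap A B B)
            rw [Equiv.swap_apply_left, Equiv.swap_apply_right]
            exact asymm h2)
      rw [hswapswap, Finset.card_singleton, hlen] at h3
      omega
  have hmid : ¬(A < P ∧ P < B ∧ v A < v P ∧ v P < v B) := by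
    rintro ⟨h1, h2, h3, h4⟩
    have hE : ∀ q : Fin (n + 2) × Fin (n + 2),
        q ∈ ({(B, A), (B, P), (P, A)} : Finset _) ↔
        q = (B, A) ∨ q = (B, P) ∨ q = (P, A) := by
      intro q; simp [Finset.mem_insert, Finset.mem_singleton]
    have hσP : Equiv.swap A B P = P := Equiv.swap_apply_of_ne_of_ne hPA hPB
    have h5 := len_add_le v A B hABlt hvAB {(B, A), (B, P), (P, A)}
      (by intro q hq; rcases (hE q).1 hq with rfl | rfl | rfl
          · exact hvAB
          · exact h4
          · exact h3)
      (by intro q hq; rcases (hE q).1 hq with rfl | rfl | rfl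
          · show Equiv.swap A B B < Equiv.swap A B A
            rw [Equiv.swap_apply_left, Equiv.swap_apply_right]; exact hABlt
          · show Equiv.swap A B B < Equiv.swap A B P
            rw [Equiv.swap_apply_right, hσP]; exact h1
          · show Equiv.swap A B P < Equiv.swap A B A
            rw [Equiv.swap_apply_left, hσP]; exact h2)
      (by intro q hq; rcases (hE q).1 hq with rfl | rfl | rfl
          · exact asymm hABlt
          · exact asymm h2
          · exact asymm h1)
      (by intro q hq; rcases (hE q).1 hq with rfl | rfl | rfl
          · show ¬ v (Equiv.swap A B A) < v (Equiv.swap A B B)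
            rw [Equiv.swap_apply_left, Equiv.swap_apply_right]; exact asymm hvAB
          · show ¬ v (Equiv.swap A B P) < v (Equiv.swap A B B)
            rw [Equiv.swap_apply_right, hσP]; exact asymm h3
          · show ¬ v (Equiv.swap A B A) < v (Equiv.swap A B P)
            rw [Equiv.swap_apply_left, hσP]; exact asymm h4)
    have dAP : A ≠ P := fun h => hPA h.symm
    have dBP : B ≠ P := fun h => hPB h.symm
    have hc : ({(B, A), (B, P), (P, A)} : Finset (Fin (n + 2) × Fin (n + 2))).card = 3 := by
      rw [Finset.card_insert_of_notMem (by simp [Prod.ext_iff, dAP, dBP]),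
        Finset.card_insert_of_notMem (by simp [Prod.ext_iff, dBP]),
        Finset.card_singleton]
    rw [hc, hlen] at h5
    omega
  have e1 := len_drop_add (N := n + 1) (v * Equiv.swap A B) P
  have e2 := len_drop_add (N := n + 1) v P
  have e3 := invP_mul_swap v A B P hABlt hPA hPB hvAB hmid
  rw [hlen, e3] at e1
  omega

end SchubertPieri
end

section
/- Let V be an n-dimensional complex vector space and k ≤ n a positive integer. Suppose L₁,…,L_k, M are subspaces of V with V = M ⊕ L₁ ⊕ ⋯ ⊕ L_k (internal direct sum) and each L_j nonzero. Let r_j = dim L_j − 1 and m = r₁ + ⋯ + r_k. Then there exist opposite complete flags F• and F′• in V and partitions λ ⊃ μ with at most k parts and λ₁ ≤ n−k, such that λ_j − μ_j = r_j for 1 ≤ j ≤ k, λ/μ is a skew row of length m, and Ω_μ F• ∩ Ω_{λᶜ} F′• = { H ⊂ V : dim H = k and dim(H ∩ L_j) = 1 for 1 ≤ j ≤ k }. -/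
namespace SchubertPieriGeom

/-- `F` is a complete flag in `V`: a chain `F 1 ⊂ F 2 ⊂ ⋯ ⊂ F n = V` of subspaces
with `dim (F i) = i`. -/
def IsCompleteFlag (n : ℕ) {V : Type*} [AddCommGroup V] [Module ℂ V]
    (F : ℕ → Submodule ℂ V) : Prop :=
  (∀ i, i ≤ n → Module.finrank ℂ (F i) = i) ∧
  (∀ i j, i ≤ j → j ≤ n → F i ≤ F j) ∧ F n = ⊤

/-- Two complete flags are opposite if `F i + F' (n-i) = V` for all `i`. -/
def OppositeFlags (n : ℕ) {V : Type*} [AddCommGroup V] [Module ℂ V]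
    (F F' : ℕ → Submodule ℂ V) : Prop :=
  ∀ i, 1 ≤ i → i ≤ n → F i ⊔ F' (n - i) = ⊤

/-- `lam` is a partition with at most `k` parts (1-indexed parts, normalized by
`lam 0 = 0`). -/
def IsPartFun (k : ℕ) (lam : ℕ → ℕ) : Prop :=
  lam 0 = 0 ∧ (∀ j, 1 ≤ j → lam (j + 1) ≤ lam j) ∧ ∀ j, k < j → lam j = 0

/-- The Schubert variety `Ω_λ F• = {H ∈ G_k V : dim (H ∩ F_{n-k+j-λ_j}) ≥ j}` in the
Grassmannian of `k`-dimensional subspaces of `V`. -/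
def Omega (n k : ℕ) {V : Type*} [AddCommGroup V] [Module ℂ V]
    (lam : ℕ → ℕ) (F : ℕ → Submodule ℂ V) : Set (Submodule ℂ V) :=
  {H | Module.finrank ℂ H = k ∧
    ∀ j, 1 ≤ j → j ≤ k → j ≤ Module.finrank ℂ ↥(H ⊓ F (n - k + j - lam j))}

/-- The complementary partition `λᶜ = (n-k-λ_k, …, n-k-λ_1)`. -/
def complPart (n k : ℕ) (lam : ℕ → ℕ) : ℕ → ℕ :=
  fun j => n - k - lam (k + 1 - j)

section Aux
open Module Submodule Finset
variable {V : Type*} [AddCommGroup V] [Module ℂ V] [FiniteDimensional ℂ V]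


variable {V : Type*} [AddCommGroup V] [Module ℂ V] [FiniteDimensional ℂ V]

lemma aux_disjoint_sup (f : ℕ → Submodule ℂ V)
    (h : ∀ a (t : Finset ℕ), a ∉ t → Disjoint (f a) (t.sup f)) :
    ∀ (s t : Finset ℕ), Disjoint s t → Disjoint (s.sup f) (t.sup f) := by
  intro s
  induction s using Finset.induction_on with
  | empty => intro t _; simp
  | insert a s ha ih =>
    intro t hdisj
    rw [Finset.sup_insert]
    have h1 : a ∉ s ∪ t := by
      simp only [Finset.mem_union]
      rintro (h' | h')
      · exact ha h'
      · exact (Finset.disjoint_left.mp hdisj (Finset.mem_insert_self a s)) h'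
    have h2 : Disjoint (f a) (s.sup f ⊔ t.sup f) := by
      rw [← Finset.sup_union]
      exact h a (s ∪ t) h1
    exact Disjoint.disjoint_sup_left_of_disjoint_sup_right
      (ih t (Finset.disjoint_of_subset_left (Finset.subset_insert a s) hdisj)) h2

lemma aux_finrank_sup (f : ℕ → Submodule ℂ V)
    (h : ∀ a (t : Finset ℕ), a ∉ t → Disjoint (f a) (t.sup f)) (s : Finset ℕ) :
    Module.finrank ℂ ↥(s.sup f) = ∑ a ∈ s, Module.finrank ℂ (f a) := by
  induction s using Finset.induction_on with
  | empty => simp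
  | insert a s ha ih =>
    rw [Finset.sup_insert, Finset.sum_insert ha, ← ih]
    have h2 := Submodule.finrank_sup_add_finrank_inf_eq (f a) (s.sup f)
    rw [disjoint_iff.mp (h a s ha), finrank_bot] at h2
    omega

lemma aux_all_one {s : Finset ℕ} {g : ℕ → ℕ} (h1 : ∀ i ∈ s, 1 ≤ g i)
    (h2 : ∑ i ∈ s, g i ≤ s.card) : ∀ i ∈ s, g i = 1 := by
  have key : ∑ i ∈ s, (g i - 1) = 0 := by
    have e1 : ∑ i ∈ s, (g i - 1) + s.card = ∑ i ∈ s, g i := by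
      rw [Finset.card_eq_sum_ones s, ← Finset.sum_add_distrib]
      exact Finset.sum_congr rfl fun i hi => by have := h1 i hi; omega
    omega
  intro i hi
  have := (Finset.sum_eq_zero_iff.mp key) i hi
  have := h1 i hi
  omega



lemma card_fin_lt {n t : ℕ} (h : t ≤ n) : Fintype.card {x : Fin n // (x : ℕ) < t} = t := by
  have e : {x : Fin n // (x : ℕ) < t} ≃ Fin t :=
    { toFun := fun x => ⟨x.1.val, x.2⟩
      invFun := fun y => ⟨⟨y.val, lt_of_lt_of_le y.isLt h⟩, y.isLt⟩
      left_inv := fun x => Subtype.ext (Fin.ext rfl)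
      right_inv := fun y => rfl }
  rw [Fintype.card_congr e, Fintype.card_fin]

lemma card_fin_ge {n t : ℕ} (h : t ≤ n) : Fintype.card {x : Fin n // n - t ≤ (x : ℕ)} = t := by
  have e : {x : Fin n // n - t ≤ (x : ℕ)} ≃ Fin t :=
    { toFun := fun x => ⟨x.1.val - (n - t), by have := x.1.isLt; have := x.2; omega⟩
      invFun := fun y => ⟨⟨y.val + (n - t), by have := y.isLt; omega⟩,
        by show n - t ≤ y.val + (n - t); omega⟩
      left_inv := fun x => by
        apply Subtype.ext; apply Fin.ext; have := x.2; simp; omega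
      right_inv := fun y => by apply Fin.ext; simp }
  rw [Fintype.card_congr e, Fintype.card_fin]

lemma finrank_span_image {V : Type*} [AddCommGroup V] [Module ℂ V]
    {ι : Type*} [Fintype ι] (c : Basis ι ℂ V) (S : Set ι) [Fintype S] :
    Module.finrank ℂ (Submodule.span ℂ (⇑c '' S)) = Fintype.card S := by
  have li : LinearIndependent ℂ (fun p : S => c ↑p) :=
    c.linearIndependent.comp _ Subtype.val_injective
  have h := finrank_span_eq_card li
  have hr : Set.range (fun p : S => c ↑p) = ⇑c '' S := by
    rw [show (fun p : S => c ↑p) = ⇑c ∘ Subtype.val from rfl, Set.range_comp,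
      Subtype.range_val]
  rwa [hr] at h

end Aux

open Module Submodule Finset in
/-- If `V = M ⊕ L₁ ⊕ ⋯ ⊕ L_k` with each `L_j ≠ 0`, `r_j = dim L_j - 1` and
`m = r₁ + ⋯ + r_k`, then there are opposite complete flags `F•`, `F'•` and
partitions `λ ⊃ μ` with at most `k` parts and `λ₁ ≤ n-k`, with `λ_j - μ_j = r_j`
and `λ/μ` a skew row of length `m`, such that `Ω_μ F• ∩ Ω_{λᶜ} F'•` is the set of
`k`-planes meeting every `L_j` in dimension `1`. -/
theorem grassmannian_intersection (n k : ℕ) (hk : 1 ≤ k) (hkn : k ≤ n)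
    (V : Type*) [AddCommGroup V] [Module ℂ V] [FiniteDimensional ℂ V]
    (hdim : Module.finrank ℂ V = n)
    (L : ℕ → Submodule ℂ V) (M : Submodule ℂ V)
    (hinternal : DirectSum.IsInternal
      (Fin.cons M (fun j : Fin k => L ((j : ℕ) + 1)) : Fin (k + 1) → Submodule ℂ V))
    (hL : ∀ j, 1 ≤ j → j ≤ k → L j ≠ ⊥) :
    ∃ F F' : ℕ → Submodule ℂ V, IsCompleteFlag n F ∧ IsCompleteFlag n F' ∧
      OppositeFlags n F F' ∧
      ∃ lam mu : ℕ → ℕ, IsPartFun k lam ∧ IsPartFun k mu ∧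
        lam 1 ≤ n - k ∧ (∀ j, mu j ≤ lam j) ∧
        (∀ j, 1 ≤ j → j ≤ k → lam j = mu j + (Module.finrank ℂ (L j) - 1)) ∧
        (∀ j, 1 ≤ j → lam (j + 1) ≤ mu j) ∧
        (∑ j ∈ Finset.Icc 1 k, (lam j - mu j)) =
          ∑ j ∈ Finset.Icc 1 k, (Module.finrank ℂ (L j) - 1) ∧
        Omega n k mu F ∩ Omega n k (complPart n k lam) F' =
          {H : Submodule ℂ V | Module.finrank ℂ H = k ∧
            ∀ j, 1 ≤ j → j ≤ k → Module.finrank ℂ ↥(H ⊓ L j) = 1} := by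
  classical
  classical
  set N : Fin (k + 1) → Submodule ℂ V :=
    (Fin.cons M (fun j : Fin k => L ((j : ℕ) + 1))) with hNdef
  set m : Fin (k + 1) → ℕ := fun i => Module.finrank ℂ (N i) with hmdef
  let B : ∀ i, Basis (Fin (m i)) ℂ (N i) := fun i => Module.finBasis ℂ (N i)
  let c : Basis ((i : Fin (k + 1)) × Fin (m i)) ℂ V := hinternal.collectedBasis B
  have hc : ∀ p : (i : Fin (k + 1)) × Fin (m i), (c p : V) = (B p.1 p.2 : V) := by
    intro p; rw [hinternal.collectedBasis_coe]
  have hcmem : ∀ p : (i : Fin (k + 1)) × Fin (m i), (c p : V) ∈ N p.1 :=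
    fun p => hinternal.collectedBasis_mem B p
  set NN : ℕ → Submodule ℂ V := fun t => if t = 0 then M else if t ≤ k then L t else ⊥
    with hNNdef
  have hNNval : ∀ i : Fin (k + 1), N i = NN i.val := by
    intro i
    induction i using Fin.cases with
    | zero => simp [hNNdef, hNdef]
    | succ q =>
      have h1 : (q.succ : Fin (k+1)).val = q.val + 1 := rfl
      simp only [hNNdef, hNdef, Fin.cons_succ, h1]
      have : q.val + 1 ≤ k := q.isLt
      simp [this]
  -- offsets
  set dN : ℕ → ℕ := fun t => if h : t < k + 1 then m ⟨t, h⟩ else 0 with hdNdef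
  set off : ℕ → ℕ := fun j => ∑ t ∈ Finset.range j, dN t with hoffdef
  set idx : ((i : Fin (k + 1)) × Fin (m i)) → ℕ := fun p => off p.1.val + p.2.val
    with hidxdef
  have hoffsucc : ∀ t, off (t + 1) = off t + dN t := by
    intro t; simp only [hoffdef]; rw [Finset.sum_range_succ]
  have hoffmono : Monotone off := by
    intro a b hab
    exact Finset.sum_le_sum_of_subset (Finset.range_subset_range.mpr hab)
  have hdN : ∀ i : Fin (k + 1), dN i.val = m i := by
    intro i; simp only [hdNdef]; rw [dif_pos i.isLt]
  have hcard : Fintype.card ((i : Fin (k + 1)) × Fin (m i)) = n := by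
    rw [← hdim, Module.finrank_eq_card_basis c]
  have hsum : ∑ i : Fin (k + 1), m i = n := by
    rw [← hcard, Fintype.card_sigma]; simp
  have hn : off (k + 1) = n := by
    simp only [hoffdef]
    rw [← hsum, ← Fin.sum_univ_eq_sum_range]
    exact Finset.sum_congr rfl fun i _ => hdN i
  have hidxlt : ∀ p : ((i : Fin (k + 1)) × Fin (m i)), idx p < off (p.1.val + 1) := by
    intro p
    rw [hoffsucc, hdN p.1]
    exact Nat.add_lt_add_left p.2.isLt _
  have hlt : ∀ p, idx p < n := by
    intro p
    exact lt_of_lt_of_le (hidxlt p) (hn ▸ hoffmono p.1.isLt)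
  have hidx_iff : ∀ (j : ℕ) p, idx p < off j ↔ p.1.val < j := by
    intro j p
    constructor
    · intro h
      by_contra hcon
      push_neg at hcon
      exact absurd (lt_of_lt_of_le h (hoffmono hcon)) (by simp [hidxdef])
    · intro h
      exact lt_of_lt_of_le (hidxlt p) (hoffmono h)
  have hidx_ge : ∀ (j : ℕ) p, off j ≤ idx p ↔ j ≤ p.1.val := by
    intro j p
    rw [← not_lt, ← not_lt, not_iff_not]
    exact hidx_iff j p
  -- the equiv to Fin n
  have hinj : Function.Injective (fun p : ((i : Fin (k + 1)) × Fin (m i)) =>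
      (⟨idx p, hlt p⟩ : Fin n)) := by
    intro p q hpq
    simp only [Fin.mk.injEq] at hpq
    have h1 : p.1 = q.1 := by
      by_contra hne
      rcases lt_or_gt_of_ne (fun h : p.1.val = q.1.val => hne (Fin.ext h)) with h | h
      · have := lt_of_lt_of_le (hidxlt p) (hoffmono h)
        have := (hidx_ge q.1.val q).mpr le_rfl
        omega
      · have := lt_of_lt_of_le (hidxlt q) (hoffmono h)
        have := (hidx_ge p.1.val p).mpr le_rfl
        omega
    rcases p with ⟨i, x⟩; rcases q with ⟨i', y⟩
    cases h1
    simp only [hidxdef] at hpq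
    have : x = y := Fin.ext (by omega)
    rw [this]
  have hbij := (Fintype.bijective_iff_injective_and_card _).mpr ⟨hinj, by rw [hcard]; simp⟩
  set e : ((i : Fin (k + 1)) × Fin (m i)) ≃ Fin n := Equiv.ofBijective _ hbij with hedef
  have he : ∀ p, (e p : ℕ) = idx p := fun p => rfl
  -- flags
  set F : ℕ → Submodule ℂ V := fun t => span ℂ (⇑c '' {p | idx p < t}) with hFdef
  set F' : ℕ → Submodule ℂ V := fun t => span ℂ (⇑c '' {p | n - t ≤ idx p}) with hF'def
  have hFrank : ∀ t, t ≤ n → finrank ℂ (F t) = t := by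
    intro t ht
    rw [hFdef]
    rw [finrank_span_image c {p | idx p < t}]
    have ecard : {p : (i : Fin (k + 1)) × Fin (m i) // idx p < t} ≃ {x : Fin n // (x : ℕ) < t} :=
      e.subtypeEquiv (fun p => Iff.rfl)
    exact (Fintype.card_congr ecard).trans (card_fin_lt ht)
  have hF'rank : ∀ t, t ≤ n → finrank ℂ (F' t) = t := by
    intro t ht
    rw [hF'def]
    rw [finrank_span_image c {p | n - t ≤ idx p}]
    have ecard : {p : (i : Fin (k + 1)) × Fin (m i) // n - t ≤ idx p} ≃
        {x : Fin n // n - t ≤ (x : ℕ)} := e.subtypeEquiv (fun p => Iff.rfl)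
    exact (Fintype.card_congr ecard).trans (card_fin_ge ht)
  have hFflag : (∀ i, i ≤ n → finrank ℂ (F i) = i) ∧
      (∀ i j, i ≤ j → j ≤ n → F i ≤ F j) ∧ F n = ⊤ := by
    refine ⟨hFrank, ?_, ?_⟩
    · intro i j hij _
      exact span_mono (Set.image_mono fun p hp => lt_of_lt_of_le hp hij)
    · show span ℂ (⇑c '' {p | idx p < n}) = ⊤
      have : {p : (i : Fin (k + 1)) × Fin (m i) | idx p < n} = Set.univ :=
        Set.eq_univ_of_forall fun p => hlt p
      rw [this, Set.image_univ, Basis.span_eq]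
  have hF'flag : (∀ i, i ≤ n → finrank ℂ (F' i) = i) ∧
      (∀ i j, i ≤ j → j ≤ n → F' i ≤ F' j) ∧ F' n = ⊤ := by
    refine ⟨hF'rank, ?_, ?_⟩
    · intro i j hij _
      exact span_mono (Set.image_mono fun p hp => le_trans (Nat.sub_le_sub_left hij n) hp)
    · show span ℂ (⇑c '' {p | n - n ≤ idx p}) = ⊤
      have : {p : (i : Fin (k + 1)) × Fin (m i) | n - n ≤ idx p} = Set.univ :=
        Set.eq_univ_of_forall fun p => by simp
      rw [this, Set.image_univ, Basis.span_eq]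
  have hopp : ∀ i, 1 ≤ i → i ≤ n → F i ⊔ F' (n - i) = ⊤ := by
    intro i _ hin
    show span ℂ (⇑c '' {p | idx p < i}) ⊔ span ℂ (⇑c '' {p | n - (n - i) ≤ idx p}) = ⊤
    rw [← Submodule.span_union, ← Set.image_union]
    have : ({p : (i : Fin (k + 1)) × Fin (m i) | idx p < i} ∪
        {p | n - (n - i) ≤ idx p}) = Set.univ := by
      apply Set.eq_univ_of_forall
      intro p
      have : n - (n - i) = i := by omega
      by_cases h : idx p < i
      · exact Or.inl h
      · exact Or.inr (by rw [Set.mem_setOf_eq, this]; omega)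
    rw [this, Set.image_univ, Basis.span_eq]
  -- block span lemmas
  have hNi_span : ∀ i : Fin (k + 1),
      N i ≤ span ℂ (⇑c '' {p : (i : Fin (k + 1)) × Fin (m i) | p.1 = i}) := by
    intro i
    have h1 : N i = span ℂ (Set.range fun y : Fin (m i) => (c ⟨i, y⟩ : V)) := by
      calc N i = Submodule.map (N i).subtype ⊤ := (Submodule.map_subtype_top _).symm
        _ = Submodule.map (N i).subtype (span ℂ (Set.range (B i))) := by rw [Basis.span_eq]
        _ = span ℂ ((N i).subtype '' Set.range (B i)) := Submodule.map_span _ _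
        _ = span ℂ (Set.range fun y : Fin (m i) => (c ⟨i, y⟩ : V)) := by
            rw [← Set.range_comp]
            have hfun : ((N i).subtype ∘ ⇑(B i)) = fun y : Fin (m i) => (c ⟨i, y⟩ : V) := by
              funext y
              exact (hc ⟨i, y⟩).symm
            rw [hfun]
    rw [h1]
    apply span_mono
    intro x hx
    obtain ⟨y, rfl⟩ := hx
    exact ⟨⟨i, y⟩, rfl, rfl⟩
  have hVa : ∀ j : ℕ,
      span ℂ (⇑c '' {p : (i : Fin (k + 1)) × Fin (m i) | p.1.val < j}) =
        (Finset.range j).sup NN := by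
    intro j
    apply le_antisymm
    · rw [span_le]
      rintro _ ⟨p, hp, rfl⟩
      have h1 : (c p : V) ∈ NN p.1.val := (hNNval p.1) ▸ hcmem p
      exact SetLike.le_def.mp (Finset.le_sup (Finset.mem_range.mpr hp)) h1
    · apply Finset.sup_le
      intro t ht
      rw [Finset.mem_range] at ht
      by_cases htk : t ≤ k
      · have htlt : t < k + 1 := by omega
        have h1 : NN t = N ⟨t, htlt⟩ := (hNNval ⟨t, htlt⟩).symm
        rw [h1]
        refine le_trans (hNi_span ⟨t, htlt⟩) (span_mono (Set.image_mono ?_))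
        intro p hp
        rw [Set.mem_setOf_eq] at hp ⊢
        rw [hp]
        exact ht
      · have ht0 : t ≠ 0 := by omega
        have hb : NN t = ⊥ := by simp [hNNdef, htk, ht0]
        rw [hb]; exact bot_le
  have hVb : ∀ j : ℕ,
      span ℂ (⇑c '' {p : (i : Fin (k + 1)) × Fin (m i) | j ≤ p.1.val}) =
        (Finset.Icc j k).sup NN := by
    intro j
    apply le_antisymm
    · rw [span_le]
      rintro _ ⟨p, hp, rfl⟩
      have h1 : (c p : V) ∈ NN p.1.val := (hNNval p.1) ▸ hcmem p
      have h2 : p.1.val ∈ Finset.Icc j k := by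
        rw [Finset.mem_Icc]
        exact ⟨hp, by have := p.1.isLt; omega⟩
      exact SetLike.le_def.mp (Finset.le_sup h2) h1
    · apply Finset.sup_le
      intro t ht
      rw [Finset.mem_Icc] at ht
      have htlt : t < k + 1 := by omega
      have h1 : NN t = N ⟨t, htlt⟩ := (hNNval ⟨t, htlt⟩).symm
      rw [h1]
      refine le_trans (hNi_span ⟨t, htlt⟩) (span_mono (Set.image_mono ?_))
      intro p hp
      rw [Set.mem_setOf_eq] at hp ⊢
      rw [hp]
      exact ht.1
  have hFoff : ∀ j : ℕ, F (off j) = (Finset.range j).sup NN := by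
    intro j
    show span ℂ (⇑c '' {p | idx p < off j}) = (Finset.range j).sup NN
    have : {p : (i : Fin (k + 1)) × Fin (m i) | idx p < off j} = {p | p.1.val < j} := by
      ext p; exact hidx_iff j p
    rw [this]
    exact hVa j
  have hF'off : ∀ j : ℕ, j ≤ k + 1 → F' (n - off j) = (Finset.Icc j k).sup NN := by
    intro j hj
    show span ℂ (⇑c '' {p | n - (n - off j) ≤ idx p}) = (Finset.Icc j k).sup NN
    have hoffn : off j ≤ n := hn ▸ hoffmono hj
    have h0 : n - (n - off j) = off j := by omega
    have : {p : (i : Fin (k + 1)) × Fin (m i) | n - (n - off j) ≤ idx p} =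
        {p | j ≤ p.1.val} := by
      ext p
      rw [Set.mem_setOf_eq, Set.mem_setOf_eq, h0]
      exact hidx_ge j p
    rw [this]
    exact hVb j
  -- independence of the NN family
  have hNNindep : ∀ a (u : Finset ℕ), a ∉ u → Disjoint (NN a) (u.sup NN) := by
    intro a u hau
    by_cases hak : a ≤ k
    · have halt : a < k + 1 := by omega
      have hd := hinternal.submodule_iSupIndep ⟨a, halt⟩
      rw [hNNval ⟨a, halt⟩] at hd
      refine hd.mono_right ?_
      apply Finset.sup_le
      intro t ht
      by_cases htk : t ≤ k
      · have htlt : t < k + 1 := by omega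
        have h1 : NN t = N ⟨t, htlt⟩ := (hNNval ⟨t, htlt⟩).symm
        rw [h1]
        have hne : (⟨t, htlt⟩ : Fin (k + 1)) ≠ ⟨a, halt⟩ := by
          intro hcontra
          apply hau
          have : t = a := by
            have := Fin.mk.injEq t htlt a halt ▸ hcontra
            exact Fin.val_eq_val (⟨t, htlt⟩ : Fin (k+1)) ⟨a, halt⟩ |>.mpr hcontra
          rwa [← this]
        exact le_iSup₂ (f := fun (j : Fin (k+1)) (_ : j ≠ ⟨a, halt⟩) => N j) ⟨t, htlt⟩ hne
      · have ht0 : t ≠ 0 := by omega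
        have hb : NN t = ⊥ := by simp [hNNdef, htk, ht0]
        rw [hb]; exact bot_le
    · have ht0 : a ≠ 0 := by omega
      have hb : NN a = ⊥ := by simp [hNNdef, hak, ht0]
      rw [hb]; exact disjoint_bot_left
  have hNNsups : ∀ (s t : Finset ℕ), Disjoint s t → Disjoint (s.sup NN) (t.sup NN) :=
    aux_disjoint_sup NN hNNindep
  -- key modular intersection
  have hNNL : ∀ j, 1 ≤ j → j ≤ k → NN j = L j := by
    intro j hj1 hjk
    have hj0 : j ≠ 0 := by omega
    simp [hNNdef, hjk, hj0]
  have hABj : ∀ j, 1 ≤ j → j ≤ k →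
      ((Finset.range (j + 1)).sup NN) ⊓ ((Finset.Icc j k).sup NN) = NN j := by
    intro j hj1 hjk
    have hsplit1 : Finset.range (j + 1) = insert j (Finset.range j) := Finset.range_add_one
    have hsplit2 : Finset.Icc j k = insert j (Finset.Icc (j + 1) k) := by
      ext t; simp only [Finset.mem_Icc, Finset.mem_insert]; omega
    rw [hsplit1, hsplit2, Finset.sup_insert, Finset.sup_insert]
    rw [sup_inf_assoc_of_le _ (le_sup_left : NN j ≤ NN j ⊔ (Finset.Icc (j + 1) k).sup NN)]
    have hdisj : Disjoint ((Finset.range j).sup NN) (NN j ⊔ (Finset.Icc (j + 1) k).sup NN) := by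
      rw [← Finset.sup_insert, ← hsplit2]
      apply hNNsups
      rw [Finset.disjoint_left]
      intro t ht ht2
      rw [Finset.mem_range] at ht
      rw [Finset.mem_Icc] at ht2
      omega
    rw [disjoint_iff.mp hdisj, sup_bot_eq]
  -- partitions
  set lam : ℕ → ℕ :=
    fun j => if j = 0 then 0 else ∑ t ∈ Finset.Icc j k, (Module.finrank ℂ (L t) - 1)
    with hlamdef
  set mu : ℕ → ℕ :=
    fun j => if j = 0 then 0 else ∑ t ∈ Finset.Icc (j + 1) k, (Module.finrank ℂ (L t) - 1)
    with hmudef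
  have hr1 : ∀ t, 1 ≤ t → t ≤ k → 1 ≤ Module.finrank ℂ (L t) := by
    intro t ht1 htk
    by_contra hcon
    push_neg at hcon
    exact hL t ht1 htk (Submodule.finrank_eq_zero.mp (by omega))
  have hT : ∀ j, 1 ≤ j → j ≤ k + 1 →
      off j + ∑ t ∈ Finset.Icc j k, Module.finrank ℂ (L t) = n := by
    intro j hj1 hjk
    have h1 : off (k + 1) = off j + ∑ t ∈ Finset.Ico j (k + 1), dN t := by
      simp only [hoffdef]
      exact (Finset.sum_range_add_sum_Ico dN (by omega : j ≤ k + 1)).symm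
    have h2 : ∑ t ∈ Finset.Ico j (k + 1), dN t
        = ∑ t ∈ Finset.Icc j k, Module.finrank ℂ (L t) := by
      rw [Finset.Ico_add_one_right_eq_Icc]
      apply Finset.sum_congr rfl
      intro t ht
      rw [Finset.mem_Icc] at ht
      have htlt : t < k + 1 := by omega
      have hdnt : dN t = m ⟨t, htlt⟩ := dif_pos htlt
      have hNt : N ⟨t, htlt⟩ = L t := by
        rw [hNNval ⟨t, htlt⟩, hNNL t (by omega) (by omega)]
      rw [hdnt]
      simp only [hmdef]
      rw [hNt]
    rw [h1, h2] at hn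
    omega
  have hsub : ∀ j, 1 ≤ j → j ≤ k + 1 →
      (∑ t ∈ Finset.Icc j k, (Module.finrank ℂ (L t) - 1)) + (k + 1 - j)
        = ∑ t ∈ Finset.Icc j k, Module.finrank ℂ (L t) := by
    intro j hj1 hjk
    have hcard1 : (Finset.Icc j k).card = k + 1 - j := Nat.card_Icc j k
    rw [← hcard1, Finset.card_eq_sum_ones, ← Finset.sum_add_distrib]
    apply Finset.sum_congr rfl
    intro t ht
    rw [Finset.mem_Icc] at ht
    have := hr1 t (by omega) ht.2
    omega
  have hlam_val : ∀ j, 1 ≤ j →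
      lam j = ∑ t ∈ Finset.Icc j k, (Module.finrank ℂ (L t) - 1) := by
    intro j hj1
    simp only [hlamdef]
    rw [if_neg (by omega)]
  have hmu_val : ∀ j, 1 ≤ j →
      mu j = ∑ t ∈ Finset.Icc (j + 1) k, (Module.finrank ℂ (L t) - 1) := by
    intro j hj1
    simp only [hmudef]
    rw [if_neg (by omega)]
  have hlam_mono : ∀ a b, 1 ≤ a → a ≤ b → lam b ≤ lam a := by
    intro a b ha hab
    rw [hlam_val a ha, hlam_val b (by omega)]
    apply Finset.sum_le_sum_of_subset
    apply Finset.Icc_subset_Icc hab le_rfl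
  have hlam1 : lam 1 ≤ n - k := by
    have h1 := hsub 1 le_rfl (by omega)
    have h2 := hT 1 le_rfl (by omega)
    rw [← hlam_val 1 le_rfl] at h1
    omega
  have hlam_mu : ∀ j, 1 ≤ j → j ≤ k → lam j = mu j + (Module.finrank ℂ (L j) - 1) := by
    intro j hj1 hjk
    rw [hlam_val j hj1, hmu_val j hj1]
    have hsplit : Finset.Icc j k = insert j (Finset.Icc (j + 1) k) := by
      ext t; simp only [Finset.mem_Icc, Finset.mem_insert]; omega
    rw [hsplit, Finset.sum_insert (by simp [Finset.mem_Icc])]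
    omega
  have hIsPart_lam : lam 0 = 0 ∧ (∀ j, 1 ≤ j → lam (j + 1) ≤ lam j) ∧
      ∀ j, k < j → lam j = 0 := by
    refine ⟨by simp [hlamdef], fun j hj => hlam_mono j (j + 1) hj (by omega), ?_⟩
    intro j hj
    rw [hlam_val j (by omega), Finset.Icc_eq_empty (by omega), Finset.sum_empty]
  have hIsPart_mu : mu 0 = 0 ∧ (∀ j, 1 ≤ j → mu (j + 1) ≤ mu j) ∧
      ∀ j, k < j → mu j = 0 := by
    refine ⟨by simp [hmudef], ?_, ?_⟩
    · intro j hj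
      rw [hmu_val j hj, hmu_val (j + 1) (by omega)]
      apply Finset.sum_le_sum_of_subset
      apply Finset.Icc_subset_Icc (by omega) le_rfl
    · intro j hj
      rw [hmu_val j (by omega), Finset.Icc_eq_empty (by omega), Finset.sum_empty]
  have hmu_le_lam : ∀ j, mu j ≤ lam j := by
    intro j
    rcases Nat.eq_zero_or_pos j with h0 | h1
    · simp [h0, hlamdef, hmudef]
    · rw [hmu_val j h1, hlam_val j h1]
      apply Finset.sum_le_sum_of_subset
      apply Finset.Icc_subset_Icc (by omega) le_rfl
  have hskew : ∀ j, 1 ≤ j → lam (j + 1) ≤ mu j := by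
    intro j hj
    rw [hlam_val (j + 1) (by omega), hmu_val j hj]
  -- index computations
  have hindF : ∀ j, 1 ≤ j → j ≤ k → n - k + j - mu j = off (j + 1) := by
    intro j hj1 hjk
    have h1 := hsub (j + 1) (by omega) (by omega)
    have h2 := hT (j + 1) (by omega) (by omega)
    rw [← hmu_val j hj1] at h1
    omega
  have hF'T : ∀ j, 1 ≤ j → j ≤ k + 1 →
      F' (∑ t ∈ Finset.Icc j k, Module.finrank ℂ (L t)) = (Finset.Icc j k).sup NN := by
    intro j hj1 hjk
    have h3 := hT j hj1 hjk
    have h4 : (∑ t ∈ Finset.Icc j k, Module.finrank ℂ (L t)) = n - off j := by omega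
    rw [h4, hF'off j hjk]
  have hOm2 : ∀ j, 1 ≤ j → j ≤ k →
      F' (n - k + j - complPart n k lam j) = (Finset.Icc (k + 1 - j) k).sup NN := by
    intro j hj1 hjk
    have h4 : complPart n k lam j = n - k - lam (k + 1 - j) := rfl
    have hlami : lam (k + 1 - j) ≤ n - k := le_trans (hlam_mono 1 (k + 1 - j) le_rfl (by omega)) hlam1
    have h1 := hsub (k + 1 - j) (by omega) (by omega)
    rw [← hlam_val (k + 1 - j) (by omega)] at h1
    have h5 : n - k + j - (n - k - lam (k + 1 - j))
        = ∑ t ∈ Finset.Icc (k + 1 - j) k, Module.finrank ℂ (L t) := by omega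
    rw [h4, h5, hF'T (k + 1 - j) (by omega) (by omega)]
  -- disjointness for the intersected family
  refine ⟨F, F', hFflag, hF'flag, hopp, lam, mu, hIsPart_lam, hIsPart_mu, hlam1, hmu_le_lam,
    hlam_mu, hskew, ?_, ?_⟩
  · apply Finset.sum_congr rfl
    intro j hj
    rw [Finset.mem_Icc] at hj
    have := hlam_mu j hj.1 hj.2
    omega
  · -- the main set equality
    ext H
    simp only [Omega, Set.mem_inter_iff, Set.mem_setOf_eq]
    have hdisj2 : ∀ a (u : Finset ℕ), a ∉ u →
        Disjoint (H ⊓ NN a) (u.sup fun t => H ⊓ NN t) :=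
      fun a u ha => (hNNindep a u ha).mono inf_le_right
        (Finset.sup_mono_fun fun t _ => inf_le_right)
    constructor
    · rintro ⟨⟨hHk, h1⟩, ⟨-, h2⟩⟩
      refine ⟨hHk, ?_⟩
      have hge : ∀ j, 1 ≤ j → j ≤ k → 1 ≤ Module.finrank ℂ ↥(H ⊓ L j) := by
        intro j hj1 hjk
        have hA : j ≤ Module.finrank ℂ ↥(H ⊓ (Finset.range (j + 1)).sup NN) := by
          have h3 := h1 j hj1 hjk
          rwa [hindF j hj1 hjk, hFoff (j + 1)] at h3
        have hB : k + 1 - j ≤ Module.finrank ℂ ↥(H ⊓ (Finset.Icc j k).sup NN) := by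
          have h3 := h2 (k + 1 - j) (by omega) (by omega)
          rw [hOm2 (k + 1 - j) (by omega) (by omega)] at h3
          have h6 : k + 1 - (k + 1 - j) = j := by omega
          rw [h6] at h3
          exact h3
        have hkey := Submodule.finrank_sup_add_finrank_inf_eq
          (H ⊓ (Finset.range (j + 1)).sup NN) (H ⊓ (Finset.Icc j k).sup NN)
        have hsup_le : Module.finrank ℂ
            ↥((H ⊓ (Finset.range (j + 1)).sup NN) ⊔ (H ⊓ (Finset.Icc j k).sup NN)) ≤ k := by
          rw [← hHk]
          exact Submodule.finrank_mono (sup_le inf_le_left inf_le_left)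
        have hinf : (H ⊓ (Finset.range (j + 1)).sup NN) ⊓ (H ⊓ (Finset.Icc j k).sup NN)
            = H ⊓ L j := by
          rw [inf_inf_inf_comm, inf_idem, hABj j hj1 hjk, hNNL j hj1 hjk]
        rw [hinf] at hkey
        omega
      have hsum2 := aux_finrank_sup (fun t => H ⊓ NN t) hdisj2 (Finset.Icc 1 k)
      have hle : Module.finrank ℂ ↥((Finset.Icc 1 k).sup fun t => H ⊓ NN t) ≤ k := by
        rw [← hHk]
        exact Submodule.finrank_mono (Finset.sup_le fun t _ => inf_le_left)
      have hall := aux_all_one (s := Finset.Icc 1 k)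
        (g := fun t => Module.finrank ℂ ↥(H ⊓ NN t))
        (fun t ht => by
          show 1 ≤ Module.finrank ℂ ↥(H ⊓ NN t)
          rw [Finset.mem_Icc] at ht
          rw [hNNL t ht.1 ht.2]
          exact hge t ht.1 ht.2)
        (by rw [← hsum2, Nat.card_Icc]; omega)
      intro j hj1 hjk
      have h7 : Module.finrank ℂ ↥(H ⊓ NN j) = 1 :=
        hall j (Finset.mem_Icc.mpr ⟨hj1, hjk⟩)
      rwa [hNNL j hj1 hjk] at h7
    · rintro ⟨hHk, h1⟩
      have hsumIcc : ∀ a : ℕ, 1 ≤ a →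
          Module.finrank ℂ ↥((Finset.Icc a k).sup fun t => H ⊓ NN t) = k + 1 - a := by
        intro a ha
        rw [aux_finrank_sup (fun t => H ⊓ NN t) hdisj2 (Finset.Icc a k)]
        rw [← Nat.card_Icc a k, Finset.card_eq_sum_ones]
        apply Finset.sum_congr rfl
        intro t ht
        show Module.finrank ℂ ↥(H ⊓ NN t) = 1
        rw [Finset.mem_Icc] at ht
        rw [hNNL t (by omega) ht.2]
        exact h1 t (by omega) ht.2
      refine ⟨⟨hHk, ?_⟩, ⟨hHk, ?_⟩⟩
      · intro j hj1 hjk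
        rw [hindF j hj1 hjk, hFoff (j + 1)]
        have hsum3 := aux_finrank_sup (fun t => H ⊓ NN t) hdisj2 (Finset.Icc 1 j)
        have hsum_eq : Module.finrank ℂ ↥((Finset.Icc 1 j).sup fun t => H ⊓ NN t) = j := by
          rw [hsum3]
          have : ∀ t ∈ Finset.Icc 1 j, Module.finrank ℂ ↥(H ⊓ NN t) = 1 := by
            intro t ht
            rw [Finset.mem_Icc] at ht
            rw [hNNL t ht.1 (by omega)]
            exact h1 t ht.1 (by omega)
          rw [Finset.sum_congr rfl this]
          simp [Nat.card_Icc]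
        have hle2 : ((Finset.Icc 1 j).sup fun t => H ⊓ NN t)
            ≤ H ⊓ (Finset.range (j + 1)).sup NN := by
          apply Finset.sup_le
          intro t ht
          rw [Finset.mem_Icc] at ht
          exact le_inf inf_le_left
            (le_trans inf_le_right (Finset.le_sup (Finset.mem_range.mpr (by omega))))
        have h10 := Submodule.finrank_mono hle2
        rw [hsum_eq] at h10
        exact h10
      · intro j hj1 hjk
        rw [hOm2 j hj1 hjk]
        have hle2 : ((Finset.Icc (k + 1 - j) k).sup fun t => H ⊓ NN t)
            ≤ H ⊓ (Finset.Icc (k + 1 - j) k).sup NN := by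
          apply Finset.sup_le
          intro t ht
          exact le_inf inf_le_left (le_trans inf_le_right (Finset.le_sup ht))
        have h8 := hsumIcc (k + 1 - j) (by omega)
        have h9 : k + 1 - (k + 1 - j) = j := by omega
        rw [h9] at h8
        have h10 := Submodule.finrank_mono hle2
        rw [h8] at h10
        exact h10

end SchubertPieriGeom
end

section
/- Let w, w′ ∈ Sₙ and k, m positive integers with w →_{r[k,m]} w′. Then the set of transpositions used and the set of intermediate values are independent of the chosen witnessing sequence: for any two sequences a₁,b₁,…,a_m,b_m and a′₁,b′₁,…,a′_m,b′_m, each satisfying aᵢ ≤ k < bᵢ (resp. a′ᵢ ≤ k < b′ᵢ), w′ = w·t_{a₁,b₁}⋯t_{a_m,b_m} (resp. with the primed indices) and ℓ(w·t_{a₁,b₁}⋯t_{aᵢ,bᵢ}) = ℓ(w)+i for 1 ≤ i ≤ m (resp. with the primed indices), the sets of pairs {(a₁,b₁),…,(a_m,b_m)} and {(a′₁,b′₁),…,(a′_m,b′_m)} are equal, and the sets of values {(w·t_{a₁,b₁}⋯t_{aᵢ,bᵢ})(aᵢ) : 1 ≤ i ≤ m} and {(w·t_{a′₁,b′₁}⋯t_{a′ᵢ,b′ᵢ})(a′ᵢ)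 : 1 ≤ i ≤ m} are equal. -/
open Equiv MvPolynomial

attribute [local instance] Classical.propDecidable

namespace SchubertPieri

section Aux

variable {N : ℕ} [NeZero N]

lemma pos_coe {j : ℕ} (h1 : 1 ≤ j) (h2 : j ≤ N) : ((pos N j : Fin N) : ℕ) = j - 1 := by
  show (j - 1) % N = j - 1
  exact Nat.mod_eq_of_lt (by omega)

lemma tProd_zero (a b : ℕ → ℕ) : tProd N a b 0 = 1 := by
  simp [tProd]

lemma tProd_succ (a b : ℕ → ℕ) (i : ℕ) :
    tProd N a b (i + 1) = tProd N a b i * t N (a i) (b i) := by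
  simp [tProd, List.range_succ]

variable {k m : ℕ} {w w' : Equiv.Perm (Fin N)} {a b a' b' : ℕ → ℕ}

/-- bounds abbreviation -/
def ChBd (N k m : ℕ) (a b : ℕ → ℕ) : Prop :=
  ∀ i, i < m → 1 ≤ a i ∧ a i ≤ k ∧ k < b i ∧ b i ≤ N

lemma posA_lt (hab : ChBd N k m a b) {i : ℕ} (hi : i < m) :
    ((pos N (a i) : Fin N) : ℕ) < k := by
  obtain ⟨h1, h2, h3, h4⟩ := hab i hi
  rw [pos_coe h1 (by omega)]; omega

lemma posB_ge (hab : ChBd N k m a b) {i : ℕ} (hi : i < m) :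
    k ≤ ((pos N (b i) : Fin N) : ℕ) := by
  obtain ⟨h1, h2, h3, h4⟩ := hab i hi
  rw [pos_coe (by omega) h4]; omega

lemma apply_untouched (w : Equiv.Perm (Fin N)) (a b : ℕ → ℕ) {i₁ i₂ : ℕ} (h : i₁ ≤ i₂)
    (r : Fin N) (hr : ∀ j, i₁ ≤ j → j < i₂ → pos N (a j) ≠ r ∧ pos N (b j) ≠ r) :
    (w * tProd N a b i₂) r = (w * tProd N a b i₁) r := by
  induction i₂, h using Nat.le_induction with
  | base => rfl
  | succ i₂ h ih =>
    have hj := hr i₂ h (Nat.lt_succ_self _)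
    rw [tProd_succ, ← mul_assoc, Equiv.Perm.mul_apply, t,
      Equiv.swap_apply_of_ne_of_ne (Ne.symm hj.1) (Ne.symm hj.2)]
    exact ih (fun j h1 h2 => hr j h1 (by omega))

/-- injectivity hypothesis on the `pos (b i)` -/
def ChInj (N m : ℕ) [NeZero N] (b : ℕ → ℕ) : Prop :=
  ∀ i j, i < m → j < m → i ≠ j → pos N (b i) ≠ pos N (b j)

lemma key_facts (hab : ChBd N k m a b) (hinj : ChInj N m b)
    (hw' : w' = w * tProd N a b m) {i : ℕ} (hi : i < m) :
    (w * tProd N a b i) (pos N (b i)) = w (pos N (b i)) ∧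
    w' (pos N (b i)) = (w * tProd N a b i) (pos N (a i)) ∧
    (w * tProd N a b (i + 1)) (pos N (a i)) = w (pos N (b i)) := by
  have hfirst : (w * tProd N a b i) (pos N (b i)) = w (pos N (b i)) := by
    have := apply_untouched w a b (Nat.zero_le i) (pos N (b i)) (fun j h1 h2 => by
      constructor
      · intro hc
        have h1 := posA_lt hab (show j < m by omega)
        have h2 := posB_ge hab hi
        rw [hc] at h1; omega
      · exact hinj j i (by omega) hi (by omega))
    rw [this, tProd_zero, mul_one]
  refine ⟨hfirst, ?_, ?_⟩
  · have hu : (w * tProd N a b m) (pos N (b i)) = (w * tProd N a b (i + 1)) (pos N (b i)) := by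
      apply apply_untouched w a b (show i + 1 ≤ m by omega)
      intro j h1 h2
      constructor
      · intro hc
        have ha1 := posA_lt hab (show j < m by omega)
        have hb1 := posB_ge hab hi
        rw [hc] at ha1; omega
      · exact hinj j i (by omega) hi (by omega)
    rw [hw', hu, tProd_succ, ← mul_assoc, Equiv.Perm.mul_apply, t, Equiv.swap_apply_right]
  · rw [tProd_succ, ← mul_assoc, Equiv.Perm.mul_apply, t, Equiv.swap_apply_left, hfirst]

lemma posA_ne_posB (hab : ChBd N k m a b) {i j : ℕ} (hi : i < m) (hj : j < m) :
    pos N (a i) ≠ pos N (b j) := by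
  intro hc
  have h1 := posA_lt hab hi
  have h2 := posB_ge hab hj
  rw [hc] at h1; omega

lemma image_eq_D (hab : ChBd N k m a b) (hinj : ChInj N m b)
    (hw' : w' = w * tProd N a b m) :
    (Finset.range m).image (fun i => pos N (b i)) =
      Finset.univ.filter (fun q : Fin N => k ≤ (q : ℕ) ∧ w' q ≠ w q) := by
  ext q
  simp only [Finset.mem_image, Finset.mem_range, Finset.mem_filter, Finset.mem_univ, true_and]
  constructor
  · rintro ⟨i, hi, rfl⟩
    refine ⟨posB_ge hab hi, ?_⟩
    obtain ⟨hf, hs, _⟩ := key_facts hab hinj hw' hi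
    rw [hs, ← hf]
    intro hc
    exact posA_ne_posB hab hi hi ((w * tProd N a b i).injective hc)
  · rintro ⟨hq, hne⟩
    by_contra hc
    push_neg at hc
    apply hne
    have := apply_untouched w a b (Nat.zero_le m) q (fun j h1 h2 => by
      constructor
      · intro hcc
        have := posA_lt hab h2
        rw [hcc] at this; omega
      · exact hc j h2)
    rw [hw', this, tProd_zero, mul_one]

lemma D_subset_image (hab : ChBd N k m a b) (hw' : w' = w * tProd N a b m) :
    Finset.univ.filter (fun q : Fin N => k ≤ (q : ℕ) ∧ w' q ≠ w q) ⊆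
      (Finset.range m).image (fun i => pos N (b i)) := by
  intro q hq
  simp only [Finset.mem_filter, Finset.mem_univ, true_and] at hq
  simp only [Finset.mem_image, Finset.mem_range]
  by_contra hc
  push_neg at hc
  apply hq.2
  have := apply_untouched w a b (Nat.zero_le m) q (fun j h1 h2 => by
    refine ⟨?_, hc j h2⟩
    intro hcc
    have := posA_lt hab h2
    rw [hcc] at this; omega)
  rw [hw', this, tProd_zero, mul_one]

lemma chain_inj
    (hcard : (Finset.univ.filter (fun q : Fin N => k ≤ (q : ℕ) ∧ w' q ≠ w q)).card = m)
    (hab : ChBd N k m a b) (hw' : w' = w * tProd N a b m) : ChInj N m b := by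
  have h1 := D_subset_image hab hw'
  have h2 : ((Finset.range m).image (fun i => pos N (b i))).card = m := by
    refine le_antisymm (Finset.card_image_le.trans (by simp)) ?_
    calc m = _ := hcard.symm
    _ ≤ _ := Finset.card_le_card h1
  have hinj : Set.InjOn (fun i => pos N (b i)) (Finset.range m) :=
    Finset.card_image_iff.mp (by rw [h2, Finset.card_range])
  intro i j hi hj hne hc
  exact hne (hinj (by simp [hi]) (by simp [hj]) hc)

lemma left_history (hab : ChBd N k m a b) (hinj : ChInj N m b)
    (hw' : w' = w * tProd N a b m) {i : ℕ} (hi : i ≤ m) {p : Fin N} (hp : (p : ℕ) < k) :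
    (w * tProd N a b i) p = w p ∨
      ∃ j, j < i ∧ pos N (a j) = p ∧ (w * tProd N a b i) p = w (pos N (b j)) := by
  induction i with
  | zero => left; rw [tProd_zero, mul_one]
  | succ i ih =>
    have hi' : i < m := by omega
    by_cases hpa : p = pos N (a i)
    · right
      refine ⟨i, Nat.lt_succ_self _, hpa.symm, ?_⟩
      rw [hpa]
      exact (key_facts hab hinj hw' hi').2.2
    · have hpb : p ≠ pos N (b i) := by
        intro hc
        have := posB_ge hab hi'
        rw [← hc] at this; omega
      have hstep : (w * tProd N a b (i + 1)) p = (w * tProd N a b i) p := by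
        rw [tProd_succ, ← mul_assoc, Equiv.Perm.mul_apply, t,
          Equiv.swap_apply_of_ne_of_ne hpa hpb]
      rw [hstep]
      rcases ih (by omega) with h | ⟨j, hj, hja, hjv⟩
      · exact Or.inl h
      · exact Or.inr ⟨j, by omega, hja, hjv⟩

lemma partner_eq (hab : ChBd N k m a b) (hinj : ChInj N m b)
    (hw1 : w' = w * tProd N a b m)
    (hab' : ChBd N k m a' b') (hinj' : ChInj N m b')
    (hw2 : w' = w * tProd N a' b' m) :
    ∀ i, i < m → ∀ j, j < m → pos N (b i) = pos N (b' j) → pos N (a i) = pos N (a' j) := by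
  intro i
  induction i using Nat.strong_induction_on with
  | _ i IH =>
    intro hi j hj hq
    have K1 := key_facts hab hinj hw1 hi
    have K2 := key_facts hab' hinj' hw2 hj
    have hv : (w * tProd N a b i) (pos N (a i)) = (w * tProd N a' b' j) (pos N (a' j)) := by
      rw [← K1.2.1, ← K2.2.1, hq]
    have hpa1 : ((pos N (a i) : Fin N) : ℕ) < k := posA_lt hab hi
    have hpa2 : ((pos N (a' j) : Fin N) : ℕ) < k := posA_lt hab' hj
    rcases left_history hab hinj hw1 (le_of_lt hi) hpa1 with h1 | ⟨j1, hj1, hj1a, hj1v⟩ <;>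
      rcases left_history hab' hinj' hw2 (le_of_lt hj) hpa2 with h2 | ⟨j2, hj2, hj2a, hj2v⟩
    · apply w.injective
      rw [← h1, ← h2, hv]
    · exfalso
      have : w (pos N (a i)) = w (pos N (b' j2)) := by rw [← h1, hv, hj2v]
      have heq := w.injective this
      have := posB_ge hab' (show j2 < m by omega)
      rw [← heq] at this; omega
    · exfalso
      have : w (pos N (a' j)) = w (pos N (b j1)) := by rw [← h2, ← hv, hj1v]
      have heq := w.injective this
      have := posB_ge hab (show j1 < m by omega)
      rw [← heq] at this; omega
    · have hbb : pos N (b j1) = pos N (b' j2) := by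
        apply w.injective
        rw [← hj1v, ← hj2v, hv]
      have hAA := IH j1 hj1 (by omega) j2 (by omega) hbb
      rw [← hj1a, ← hj2a, hAA]

end Aux

/-- If `w →_{r[k,m]} w'`, then the set of transpositions and the set of intermediate
values do not depend on the witnessing sequence: any two sequences of
transpositions `t_{aᵢ,bᵢ}` with `aᵢ ≤ k < bᵢ` joining `w` to `w'` and increasing
length at each step use the same set of pairs `(aᵢ,bᵢ)` and produce the same set
of values `(w t_{a₁,b₁} ⋯ t_{aᵢ,bᵢ})(aᵢ)` (here the paper's `n` is `n+1`). -/
theorem relR_witness_sets_unique (n k m : ℕ) (hk : 1 ≤ k) (hm : 1 ≤ m)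
    (w w' : Equiv.Perm (Fin (n + 1)))
    (hrel : RelR (n + 1) k m w w')
    (a b a' b' : ℕ → ℕ)
    (h1 : StepOK (n + 1) k m w a b) (hw1 : w' = w * tProd (n + 1) a b m)
    (h2 : StepOK (n + 1) k m w a' b') (hw2 : w' = w * tProd (n + 1) a' b' m) :
    ({x : ℕ × ℕ | ∃ i, i < m ∧ x = (a i, b i)} =
      {x : ℕ × ℕ | ∃ i, i < m ∧ x = (a' i, b' i)}) ∧
    ({v : ℕ | ∃ i, i < m ∧ v = label w a b i} =
      {v : ℕ | ∃ i, i < m ∧ v = label w a' b' i}) := by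
  obtain ⟨a0, b0, hs0, hw0, hd0⟩ := hrel
  have hab0 : ChBd (n + 1) k m a0 b0 := hs0.1
  have hinj0 : ChInj (n + 1) m b0 := by
    intro i j hi hj hne hc
    have hbi := hab0 i hi
    have hbj := hab0 j hj
    have c1 := pos_coe (show 1 ≤ b0 i by omega) hbi.2.2.2
    have c2 := pos_coe (show 1 ≤ b0 j by omega) hbj.2.2.2
    have : b0 i - 1 = b0 j - 1 := by rw [← c1, ← c2, hc]
    exact hd0 i j hi hj hne (by omega)
  have hab1 : ChBd (n + 1) k m a b := h1.1
  have hab2 : ChBd (n + 1) k m a' b' := h2.1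
  have hcard : (Finset.univ.filter
      (fun q : Fin (n + 1) => k ≤ (q : ℕ) ∧ w' q ≠ w q)).card = m := by
    rw [← image_eq_D hab0 hinj0 hw0, Finset.card_image_of_injOn, Finset.card_range]
    intro i hi j hj hc
    by_contra hne
    exact hinj0 i j (Finset.mem_range.mp (Finset.mem_coe.mp hi))
      (Finset.mem_range.mp (Finset.mem_coe.mp hj)) hne hc
  have hinj1 : ChInj (n + 1) m b := chain_inj hcard hab1 hw1
  have hinj2 : ChInj (n + 1) m b' := chain_inj hcard hab2 hw2
  have himg : (Finset.range m).image (fun i => pos (n + 1) (b i)) =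
      (Finset.range m).image (fun i => pos (n + 1) (b' i)) := by
    rw [image_eq_D hab1 hinj1 hw1, image_eq_D hab2 hinj2 hw2]
  have hfind : ∀ i, i < m → ∃ j, j < m ∧ pos (n + 1) (b i) = pos (n + 1) (b' j) := by
    intro i hi
    have : pos (n + 1) (b i) ∈ (Finset.range m).image (fun i => pos (n + 1) (b' i)) := by
      rw [← himg]
      exact Finset.mem_image_of_mem _ (Finset.mem_range.mpr hi)
    simp only [Finset.mem_image, Finset.mem_range] at this
    obtain ⟨j, hj, hjeq⟩ := this
    exact ⟨j, hj, hjeq.symm⟩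
  have hfind' : ∀ i, i < m → ∃ j, j < m ∧ pos (n + 1) (b' i) = pos (n + 1) (b j) := by
    intro i hi
    have : pos (n + 1) (b' i) ∈ (Finset.range m).image (fun i => pos (n + 1) (b i)) := by
      rw [himg]
      exact Finset.mem_image_of_mem _ (Finset.mem_range.mpr hi)
    simp only [Finset.mem_image, Finset.mem_range] at this
    obtain ⟨j, hj, hjeq⟩ := this
    exact ⟨j, hj, hjeq.symm⟩
  have hmatch : ∀ i, i < m → ∀ j, j < m → pos (n + 1) (b i) = pos (n + 1) (b' j) →
      a i = a' j ∧ b i = b' j := by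
    intro i hi j hj hq
    have hA := partner_eq hab1 hinj1 hw1 hab2 hinj2 hw2 i hi j hj hq
    obtain ⟨q1, q2, q3, q4⟩ := hab1 i hi
    obtain ⟨r1, r2, r3, r4⟩ := hab2 j hj
    have e1 : a i - 1 = a' j - 1 := by
      rw [← pos_coe (N := n + 1) (j := a i) q1 (by omega), ← pos_coe (N := n + 1) (j := a' j) r1 (by omega), hA]
    have e2 : b i - 1 = b' j - 1 := by
      rw [← pos_coe (N := n + 1) (j := b i) (by omega) q4, ← pos_coe (N := n + 1) (j := b' j) (by omega) r4, hq]
    exact ⟨by omega, by omega⟩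
  have hlab1 : ∀ i, i < m → label w a b i = (w (pos (n + 1) (b i)) : ℕ) + 1 := by
    intro i hi
    have hkf := (key_facts hab1 hinj1 hw1 hi).2.2
    unfold label val
    rw [hkf]
  have hlab2 : ∀ i, i < m → label w a' b' i = (w (pos (n + 1) (b' i)) : ℕ) + 1 := by
    intro i hi
    have hkf := (key_facts hab2 hinj2 hw2 hi).2.2
    unfold label val
    rw [hkf]
  constructor
  · ext x
    simp only [Set.mem_setOf_eq]
    constructor
    · rintro ⟨i, hi, rfl⟩
      obtain ⟨j, hj, hq⟩ := hfind i hi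
      obtain ⟨e1, e2⟩ := hmatch i hi j hj hq
      exact ⟨j, hj, by rw [e1, e2]⟩
    · rintro ⟨j, hj, rfl⟩
      obtain ⟨i, hi, hq⟩ := hfind' j hj
      obtain ⟨e1, e2⟩ := hmatch i hi j hj hq.symm
      exact ⟨i, hi, by rw [e1, e2]⟩
  · ext v
    simp only [Set.mem_setOf_eq]
    constructor
    · rintro ⟨i, hi, rfl⟩
      obtain ⟨j, hj, hq⟩ := hfind i hi
      refine ⟨j, hj, ?_⟩
      rw [hlab1 i hi, hlab2 j hj, hq]
    · rintro ⟨j, hj, rfl⟩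
      obtain ⟨i, hi, hq⟩ := hfind' j hj
      refine ⟨i, hi, ?_⟩
      rw [hlab1 i hi, hlab2 j hj, hq]


end SchubertPieri
end
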